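/- Let P be a full-dimensional polytope in ℝⁿ, Q ⊆ interior(P) a full-dimensional polytope, and (f_i) a sequence of concave functions P → ℝ with sup_i ∫_P |f_i| ≤ C. Then the restrictions f_i|_Q are uniformly bounded below: there exists C_ℓ ∈ ℝ with f_i(x) ≥ C_ℓ for all x ∈ Q and all i. -/

import Mathlib

open MeasureTheory Metric

/-- Barycenter of a closed ball is its center. -/
lemma ball_barycenter (n : ℕ) (x : EuclideanSpace ℝ (Fin n)) (ρ : ℝ) (hρ : 0 < ρ) :
    (⨍ y in closedBall x ρ, y) = x := by
  set B := closedBall x ρ with hB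
  have hcomp : IsCompact B := isCompact_closedBall x ρ
  have hint : IntegrableOn (fun y : EuclideanSpace ℝ (Fin n) => y) B volume :=
    continuous_id.continuousOn.integrableOn_compact hcomp
  have hmp : MeasurePreserving (fun y : EuclideanSpace ℝ (Fin n) => (x + x) - y) volume volume :=
    Measure.measurePreserving_sub_left volume (x + x)
  have hemb : MeasurableEmbedding (fun y : EuclideanSpace ℝ (Fin n) => (x + x) - y) :=
    (MeasurableEquiv.subLeft (x + x)).measurableEmbedding
  have hpre : (fun y : EuclideanSpace ℝ (Fin n) => (x + x) - y) ⁻¹' B = B := by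
    ext y
    simp only [Set.mem_preimage, hB, mem_closedBall, dist_eq_norm]
    have : x + x - y - x = -(y - x) := by abel
    rw [this, norm_neg]
  have key : ∫ y in B, ((x + x) - y) = ∫ y in B, y := by
    have := hmp.setIntegral_preimage_emb hemb (fun y : EuclideanSpace ℝ (Fin n) => y) B
    rw [hpre] at this
    exact this
  have hsub : ∫ y in B, ((x + x) - y) = (volume B).toReal • (x + x) - ∫ y in B, y := by
    rw [integral_sub (integrableOn_const (C := x + x) hcomp.measure_lt_top.ne) hint,
      setIntegral_const, Measure.real]
  have hV0 : volume B ≠ 0 := (measure_closedBall_pos volume x hρ).ne'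
  have hVtop : volume B ≠ ⊤ := hcomp.measure_lt_top.ne
  have hVne : (volume B).toReal ≠ 0 := by
    simp [ENNReal.toReal_eq_zero_iff, hV0, hVtop]
  have hI : ∫ y in B, y = (volume B).toReal • x := by
    have h2 : (2:ℝ) • (∫ y in B, y) = (2:ℝ) • ((volume B).toReal • x) := by
      have := key.symm.trans hsub
      have h' : (∫ y in B, y) + (∫ y in B, y) = (volume B).toReal • (x + x) := by
        rw [eq_sub_iff_add_eq] at this
        linear_combination (norm := module) this
      rw [two_smul, two_smul, h', smul_add]
    exact smul_right_injective _ two_ne_zero h2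
  rw [setAverage_eq, hI, smul_smul, Measure.real, inv_mul_cancel₀ hVne, one_smul]

/-- A real-valued concave function on a full-dimensional compact polytope is integrable. -/
lemma concave_integrableOn (n : ℕ) (P : Set (EuclideanSpace ℝ (Fin n)))
    (S : Finset (EuclideanSpace ℝ (Fin n))) (hP : P = convexHull ℝ (S : Set _))
    (hPfull : (interior P).Nonempty) (g : EuclideanSpace ℝ (Fin n) → ℝ)
    (hg : ConcaveOn ℝ P g) : IntegrableOn g P := by
  have hcomp : IsCompact P := hP ▸ S.finite_toSet.isCompact_convexHull ℝ
  have hclosed : IsClosed P := hcomp.isClosed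
  obtain ⟨x₀, hx₀⟩ := hPfull
  have hx₀P : x₀ ∈ P := interior_subset hx₀
  -- S nonempty
  have hSne : S.Nonempty := by
    by_contra h
    rw [Finset.not_nonempty_iff_eq_empty] at h
    rw [h] at hP
    simp [hP] at hx₀P
  -- lower bound
  set m : ℝ := S.inf' hSne g with hm
  have hlow : ∀ x ∈ P, m ≤ g x := by
    intro x hx
    obtain ⟨y, hyS, hyx⟩ := hg.exists_le_of_mem_convexHull
      (t := (S : Set _)) (by rw [hP]; exact subset_convexHull ℝ _) (hP ▸ hx)
    exact le_trans (Finset.inf'_le g hyS) hyx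
  -- a ball around x₀ inside P
  obtain ⟨δ, hδ, hball⟩ := Metric.isOpen_iff.1 isOpen_interior x₀ hx₀
  set ε := δ / 2 with hε
  have hεpos : 0 < ε := by positivity
  have hcball : closedBall x₀ ε ⊆ P := by
    refine subset_trans ?_ (hball.trans interior_subset)
    intro y hy
    rw [mem_closedBall] at hy
    rw [mem_ball]
    linarith [hy]
  -- bounded: P ⊆ closedBall x₀ R
  obtain ⟨R, hR⟩ := hcomp.isBounded.subset_closedBall x₀
  have hR0 : 0 ≤ R := by
    have := hR hx₀P
    simpa using this
  -- upper bound
  set Mu : ℝ := (|g x₀| + |m|) * ((R + ε) / ε) with hMu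
  have hfrac1 : (1:ℝ) ≤ (R + ε) / ε := by
    rw [le_div_iff₀ hεpos]; linarith
  have hup : ∀ x ∈ P, g x ≤ Mu := by
    intro x hx
    have habs : g x₀ - m ≤ |g x₀| + |m| := by
      have h1 := le_abs_self (g x₀)
      have h2 := neg_abs_le m
      linarith
    rcases eq_or_ne x x₀ with rfl | hne
    · calc g x ≤ |g x| := le_abs_self _
        _ ≤ (|g x| + |m|) * 1 := by nlinarith [abs_nonneg m, abs_nonneg (g x)]
        _ ≤ Mu := by
          rw [hMu]
          apply mul_le_mul_of_nonneg_left hfrac1 (by positivity)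
    · set r : ℝ := ‖x - x₀‖ with hr
      have hrpos : 0 < r := by
        rw [hr, norm_pos_iff, sub_ne_zero]; exact hne
      have hrR : r ≤ R := by
        have := hR hx
        rw [mem_closedBall, dist_eq_norm] at this
        exact this
      set y := x₀ + (ε / r) • (x₀ - x) with hy
      have hyP : y ∈ P := by
        apply hcball
        rw [mem_closedBall, dist_eq_norm]
        have : y - x₀ = (ε / r) • (x₀ - x) := by rw [hy]; abel
        rw [this, norm_smul, norm_sub_rev]
        rw [Real.norm_eq_abs, abs_of_pos (by positivity)]
        rw [← hr, div_mul_cancel₀]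
        exact hrpos.ne'
      set a : ℝ := ε / (r + ε) with ha
      set b : ℝ := r / (r + ε) with hb
      have hapos : 0 < a := by positivity
      have hbpos : 0 < b := by positivity
      have hre : r + ε ≠ 0 := by positivity
      have hab : a + b = 1 := by
        rw [ha, hb]; field_simp; ring
      have hcomb : a • x + b • y = x₀ := by
        have hba : b * (ε / r) = a := by
          rw [hb, ha]; field_simp
        rw [hy, smul_add, smul_smul, hba]
        have : a • x + (b • x₀ + a • (x₀ - x)) = (a + b) • x₀ := by module
        rw [this, hab, one_smul]
      have := hg.2 hx hyP hapos.le hbpos.le hab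
      rw [hcomb] at this
      -- g x₀ ≥ a * g x + b * g y ≥ a * g x + b * m
      have hgy : m ≤ g y := hlow y hyP
      have h1 : a * g x ≤ g x₀ - b * m := by
        have : a * g x + b * m ≤ g x₀ := by
          have h2 : b * m ≤ b * g y := mul_le_mul_of_nonneg_left hgy hbpos.le
          calc a * g x + b * m ≤ a * g x + b * g y := by linarith
            _ ≤ g x₀ := by simpa [smul_eq_mul] using this
        linarith
      have hainv : 1 / a ≤ (R + ε) / ε := by
        rw [ha, one_div, inv_div, div_le_div_iff₀ hεpos hεpos]
        nlinarith
      have h3 : g x ≤ (g x₀ - b * m) / a := by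
        rw [le_div_iff₀ hapos]; linarith
      have hb1 : b ≤ 1 := by
        rw [hb, div_le_one (by positivity)]; linarith
      have h4 : g x₀ - b * m ≤ |g x₀| + |m| := by
        have h6 := le_abs_self (g x₀)
        have h5 : -(b * m) ≤ |m| := by
          calc -(b * m) ≤ |b * m| := neg_le_abs _
            _ = b * |m| := by rw [abs_mul, abs_of_pos hbpos]
            _ ≤ 1 * |m| := mul_le_mul_of_nonneg_right hb1 (abs_nonneg m)
            _ = |m| := one_mul _
        linarith
      calc g x ≤ (g x₀ - b * m) / a := h3
        _ ≤ (|g x₀| + |m|) / a := by gcongr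
        _ = (|g x₀| + |m|) * (1 / a) := by rw [div_eq_mul_one_div]
        _ ≤ Mu := by
            rw [hMu]
            exact mul_le_mul_of_nonneg_left hainv (by positivity)
  -- frontier of P is null
  have hfr : volume (frontier P) = 0 := hg.1.addHaar_frontier volume
  have haeeq : P =ᵐ[volume] interior P := by
    rw [MeasureTheory.ae_eq_set]
    constructor
    · rw [← hclosed.frontier_eq]; exact hfr
    · rw [Set.diff_eq_empty.2 interior_subset]; simp
  have hrestr : volume.restrict P = volume.restrict (interior P) :=
    Measure.restrict_congr_set haeeq
  have hmeas : AEStronglyMeasurable g (volume.restrict P) := by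
    rw [hrestr]
    exact (hg.continuousOn_interior).aestronglyMeasurable isOpen_interior.measurableSet
  refine ⟨hmeas, ?_⟩
  apply HasFiniteIntegral.restrict_of_bounded (C := |m| + |Mu|) hcomp.measure_lt_top
  refine (ae_restrict_iff' hclosed.measurableSet).2 (Filter.Eventually.of_forall fun x hx => ?_)
  rw [Real.norm_eq_abs, abs_le]
  constructor
  · linarith [neg_abs_le m, abs_nonneg Mu, hlow x hx]
  · linarith [hup x hx, le_abs_self Mu, abs_nonneg m]

theorem stmt5 (n : ℕ) (P Q : Set (EuclideanSpace ℝ (Fin n)))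
    (hPpoly : ∃ S : Finset (EuclideanSpace ℝ (Fin n)), P = convexHull ℝ (S : Set _))
    (hQpoly : ∃ S : Finset (EuclideanSpace ℝ (Fin n)), Q = convexHull ℝ (S : Set _))
    (hPfull : (interior P).Nonempty) (hQfull : (interior Q).Nonempty)
    (hQP : Q ⊆ interior P)
    (f : ℕ → EuclideanSpace ℝ (Fin n) → ℝ) (C : ℝ)
    (hconc : ∀ i, ConcaveOn ℝ P (f i))
    (hL1 : ∀ i, (∫ x in P, |f i x|) ≤ C) :
    ∃ Cl : ℝ, ∀ i, ∀ x ∈ Q, Cl ≤ f i x := by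
  obtain ⟨SP, hSP⟩ := hPpoly
  obtain ⟨SQ, hSQ⟩ := hQpoly
  have hQcomp : IsCompact Q := hSQ ▸ SQ.finite_toSet.isCompact_convexHull ℝ
  obtain ⟨ρ, hρpos, hρ⟩ := hQcomp.exists_cthickening_subset_open isOpen_interior hQP
  set V : ℝ := (volume (closedBall (0 : EuclideanSpace ℝ (Fin n)) ρ)).toReal with hV
  have hV0 : volume (closedBall (0 : EuclideanSpace ℝ (Fin n)) ρ) ≠ 0 :=
    (measure_closedBall_pos volume _ hρpos).ne'
  have hVtop : volume (closedBall (0 : EuclideanSpace ℝ (Fin n)) ρ) ≠ ⊤ :=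
    (isCompact_closedBall _ _).measure_lt_top.ne
  have hVpos : 0 < V := ENNReal.toReal_pos hV0 hVtop
  refine ⟨-(C / V), fun i x hx => ?_⟩
  set B := closedBall x ρ with hBdef
  have hvolB : volume B = volume (closedBall (0 : EuclideanSpace ℝ (Fin n)) ρ) :=
    Measure.addHaar_closedBall_center volume x ρ
  have hB0 : volume B ≠ 0 := by rw [hvolB]; exact hV0
  have hBtop : volume B ≠ ⊤ := by rw [hvolB]; exact hVtop
  have hBint : B ⊆ interior P := (closedBall_subset_cthickening hx ρ).trans hρ
  have hBP : B ⊆ P := hBint.trans interior_subset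
  have hconcB : ConcaveOn ℝ B (f i) := (hconc i).subset hBP (convex_closedBall _ _)
  have hcontB : ContinuousOn (f i) B := ((hconc i).continuousOn_interior).mono hBint
  have hfi : IntegrableOn (fun y : EuclideanSpace ℝ (Fin n) => y) B volume :=
    continuous_id.continuousOn.integrableOn_compact (isCompact_closedBall _ _)
  have hgi : IntegrableOn (f i) B volume :=
    hcontB.integrableOn_compact (isCompact_closedBall _ _)
  have hfs : ∀ᵐ y ∂volume.restrict B, y ∈ B :=
    (ae_restrict_iff' measurableSet_closedBall).2 (Filter.Eventually.of_forall fun y hy => hy)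
  have jensen := hconcB.le_map_set_average hcontB Metric.isClosed_closedBall hB0 hBtop hfs hfi hgi
  rw [ball_barycenter n x ρ hρpos] at jensen
  -- jensen : ⨍ y in B, f i y ≤ f i x
  have hIP : IntegrableOn (f i) P volume := concave_integrableOn n P SP hSP hPfull (f i) (hconc i)
  have habs : (∫ y in B, |f i y|) ≤ ∫ y in P, |f i y| := by
    apply setIntegral_mono_set hIP.abs
    · exact Filter.Eventually.of_forall fun y => abs_nonneg _
    · exact HasSubset.Subset.eventuallyLE hBP
  have hneg : -(∫ y in B, f i y) ≤ ∫ y in B, |f i y| := by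
    have h1 : |∫ y in B, f i y| ≤ ∫ y in B, |f i y| := by
      simpa [Real.norm_eq_abs] using norm_integral_le_integral_norm (μ := volume.restrict B) (f i)
    linarith [neg_abs_le (∫ y in B, f i y)]
  have hlowint : -C ≤ ∫ y in B, f i y := by linarith [hL1 i]
  have havg : -(C / V) ≤ ⨍ y in B, f i y := by
    rw [setAverage_eq, Measure.real, hvolB, ← hV, smul_eq_mul]
    calc -(C / V) = V⁻¹ * (-C) := by field_simp
      _ ≤ V⁻¹ * ∫ y in B, f i y :=
        mul_le_mul_of_nonneg_left hlowint (by positivity)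
  linarith [jensen, havg]
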